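/- Let Φ : (M₁,Ω₁) → (M₂,Ω₂) be a state-preserving Markov map with adjoint Φ^♯, Stinespring data (L_{Φ^♯}, σ_{Φ^♯}, τ_{Φ^♯}, V_{Φ^♯}, Λ_{Φ^♯}), and suppose Ĵ : L_{Φ^♯} → L_{Φ^♯} is an anti-unitary with Ĵ V_{Φ^♯} = V_{Φ^♯} J₁ and Ĵ Λ_{Φ^♯} = Λ_{Φ^♯} J₂. If furthermore σ_{Φ^♯}(M₂) commutes with β(M₁) := Ĵ* τ_{Φ^♯}(J₁M₁J₁) Ĵ, then for all A₂ ∈ M₂ and Y₁ ∈ M₁': Λ_{Φ^♯}* σ_{Φ^♯}(A₂) Ĵ*τ_{Φ^♯}(Y₁)Ĵ Λ_{Φ^♯} = A₂ Φ(J₁Y₁J₁) ∈ M₂ and V_{Φ^♯}* σ_{Φ^♯}(A₂) Ĵ*τ_{Φ^♯}(Y₁)Ĵ V_{Φ^♯} = Φ^♯(A₂) J₁Y₁J₁ ∈ M₁. -/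
import Mathlib


open scoped InnerProductSpace ComplexOrder
open ContinuousLinearMap (adjoint)

noncomputable section

/-- Complete positivity of a map `Φ` relative to a subset `M` of operators: matrix
amplifications preserve positivity, expressed on vectors. -/
def IsCP {H K : Type*} [NormedAddCommGroup H] [InnerProductSpace ℂ H]
    [NormedAddCommGroup K] [InnerProductSpace ℂ K]
    (M : Set (H →L[ℂ] H)) (Φ : (H →L[ℂ] H) →ₗ[ℂ] (K →L[ℂ] K)) : Prop :=
  ∀ (n : ℕ) (B : Fin n → Fin n → (H →L[ℂ] H)),
    (∀ i j, B i j ∈ M) →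
    (∀ v : Fin n → H, 0 ≤ ∑ i, ∑ j, ⟪v i, (B i j) (v j)⟫_ℂ) →
    ∀ w : Fin n → K, 0 ≤ ∑ i, ∑ j, ⟪w i, (Φ (B i j)) (w j)⟫_ℂ

/-- The Stinespring space `L_Φ` of a (completely positive) map `Φ`, defined on the
subset `M` of `B(H)` and taking values in `B(K)`: the separation-completion of the
algebraic tensor product `M ⊗ K` with respect to the semi-inner product
`⟨A ⊗ h, X ⊗ k⟩ = ⟨h, Φ(A* X) k⟩`, presented abstractly as a Hilbert space `L`
together with the bilinear map `emb A h = [A ⊗ h]` having dense span. -/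
structure StinespringData {H K : Type*}
    [NormedAddCommGroup H] [InnerProductSpace ℂ H] [CompleteSpace H]
    [NormedAddCommGroup K] [InnerProductSpace ℂ K] [CompleteSpace K]
    (M : Set (H →L[ℂ] H)) (Φ : (H →L[ℂ] H) →ₗ[ℂ] (K →L[ℂ] K))
    (L : Type*) [NormedAddCommGroup L] [InnerProductSpace ℂ L] [CompleteSpace L] where
  emb : (H →L[ℂ] H) →ₗ[ℂ] K →ₗ[ℂ] L
  inner_emb : ∀ A X : H →L[ℂ] H, A ∈ M → X ∈ M → ∀ h k : K,
    ⟪emb A h, emb X k⟫_ℂ = ⟪h, Φ (star A * X) k⟫_ℂ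
  dense_span :
    (Submodule.span ℂ {x : L | ∃ A ∈ M, ∃ h : K, x = emb A h}).topologicalClosure = ⊤
/-- `Ω` is a cyclic vector for the set of operators `M`. -/
def IsCyclicVec {H : Type*} [NormedAddCommGroup H] [InnerProductSpace ℂ H]
    (M : Set (H →L[ℂ] H)) (Ω : H) : Prop :=
  (Submodule.span ℂ {x : H | ∃ A ∈ M, x = A Ω}).topologicalClosure = ⊤

/-- `Ω` is a separating vector for the set of operators `M`. -/
def IsSeparatingVec {H : Type*} [NormedAddCommGroup H] [InnerProductSpace ℂ H]
    (M : Set (H →L[ℂ] H)) (Ω : H) : Prop :=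
  ∀ A ∈ M, A Ω = 0 → A = 0

/-- `Φ` preserves the vector states given by `Ω₁`, `Ω₂` on the algebra `M`. -/
def IsStatePreserving {H K : Type*} [NormedAddCommGroup H] [InnerProductSpace ℂ H]
    [NormedAddCommGroup K] [InnerProductSpace ℂ K]
    (M : Set (H →L[ℂ] H)) (Ω₁ : H) (Ω₂ : K)
    (Φ : (H →L[ℂ] H) →ₗ[ℂ] (K →L[ℂ] K)) : Prop :=
  ∀ A ∈ M, ⟪Ω₂, Φ A Ω₂⟫_ℂ = ⟪Ω₁, A Ω₁⟫_ℂ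
/-- The modular conjugation of a von Neumann algebra `M` in standard form with cyclic and
separating vector `Ω`: an anti-unitary involution `J` fixing `Ω`, together with the induced
conjugation `conj A = J A J` on operators, which exchanges `M` with its commutant `M'` and
acts as the identity on the natural positive cone. -/
structure ModularConjugation {H : Type*}
    [NormedAddCommGroup H] [InnerProductSpace ℂ H] [CompleteSpace H]
    (M : VonNeumannAlgebra H) (Ω : H) where
  J : H → H
  conj : (H →L[ℂ] H) → (H →L[ℂ] H)
  map_add : ∀ x y, J (x + y) = J x + J y
  map_smul : ∀ (a : ℂ) (x : H), J (a • x) = (starRingEnd ℂ a) • J x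
  invol : ∀ x, J (J x) = x
  inner_map : ∀ x y, ⟪J x, J y⟫_ℂ = ⟪y, x⟫_ℂ
  fixΩ : J Ω = Ω
  conj_apply : ∀ (A : H →L[ℂ] H) (x : H), conj A x = J (A (J x))
  conj_mem : ∀ A ∈ M, conj A ∈ M.commutant
  conj_mem' : ∀ Y ∈ M.commutant, conj Y ∈ M
  fix_cone : ∀ A ∈ M, J ((A * conj A) Ω) = (A * conj A) Ω

/-- Two vectors are equal as soon as their inner products against a set with dense
span agree. -/
lemma eq_of_inner_eq_on_dense {E : Type*} [NormedAddCommGroup E] [InnerProductSpace ℂ E]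
    {s : Set E} (hs : Dense (Submodule.span ℂ s : Set E)) {x y : E}
    (h : ∀ z ∈ s, ⟪z, x⟫_ℂ = ⟪z, y⟫_ℂ) : x = y := by
  have h' : Set.EqOn (innerSL ℂ x) (innerSL ℂ y) s := by
    intro z hz
    have := h z hz
    simp only [innerSL_apply_apply]
    rw [← inner_conj_symm, this, inner_conj_symm]
  have : innerSL ℂ x = innerSL ℂ y := ContinuousLinearMap.ext_on hs h'
  refine ext_inner_right ℂ fun v => ?_
  simpa only [innerSL_apply_apply] using congrFun (congrArg DFunLike.coe this) v

/-- Suppose `Ĵ` is an anti-unitary on `L_{Φ^♯}` with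
`Ĵ V_{Φ^♯} = V_{Φ^♯} J₁` and `Ĵ Λ_{Φ^♯} = Λ_{Φ^♯} J₂`, and that `σ_{Φ^♯}(M₂)` commutes
with `β(M₁) = Ĵ* τ_{Φ^♯}(J₁ M₁ J₁) Ĵ`. Then for all `A₂ ∈ M₂`, `Y₁ ∈ M₁'`:
`Λ* σ(A₂) Ĵ*τ(Y₁)Ĵ Λ = A₂ Φ(J₁Y₁J₁) ∈ M₂` and
`V* σ(A₂) Ĵ*τ(Y₁)Ĵ V = Φ^♯(A₂) J₁Y₁J₁ ∈ M₁`. -/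
theorem stmt17
    {H₁ H₂ : Type*} [NormedAddCommGroup H₁] [InnerProductSpace ℂ H₁] [CompleteSpace H₁]
    [NormedAddCommGroup H₂] [InnerProductSpace ℂ H₂] [CompleteSpace H₂]
    (M₁ : VonNeumannAlgebra H₁) (M₂ : VonNeumannAlgebra H₂) (Ω₁ : H₁) (Ω₂ : H₂)
    (hΩ₁ : ‖Ω₁‖ = 1) (hΩ₂ : ‖Ω₂‖ = 1)
    (hcyc₁ : IsCyclicVec (M₁ : Set (H₁ →L[ℂ] H₁)) Ω₁)
    (hsep₁ : IsSeparatingVec (M₁ : Set (H₁ →L[ℂ] H₁)) Ω₁)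
    (hcyc₂ : IsCyclicVec (M₂ : Set (H₂ →L[ℂ] H₂)) Ω₂)
    (hsep₂ : IsSeparatingVec (M₂ : Set (H₂ →L[ℂ] H₂)) Ω₂)
    (J₁ : ModularConjugation M₁ Ω₁) (J₂ : ModularConjugation M₂ Ω₂)
    (Φ : (H₁ →L[ℂ] H₁) →ₗ[ℂ] (H₂ →L[ℂ] H₂))
    (hmem : ∀ A ∈ M₁, Φ A ∈ M₂) (hunital : Φ 1 = 1)
    (hCP : IsCP (M₁ : Set (H₁ →L[ℂ] H₁)) Φ)
    (hstate : IsStatePreserving (M₁ : Set (H₁ →L[ℂ] H₁)) Ω₁ Ω₂ Φ)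
    (Φs : (H₂ →L[ℂ] H₂) →ₗ[ℂ] (H₁ →L[ℂ] H₁))
    (hmems : ∀ B ∈ M₂, Φs B ∈ M₁) (hunitals : Φs 1 = 1)
    (hCPs : IsCP (M₂ : Set (H₂ →L[ℂ] H₂)) Φs)
    (hstates : IsStatePreserving (M₂ : Set (H₂ →L[ℂ] H₂)) Ω₂ Ω₁ Φs)
    (hadj : ∀ A ∈ M₁, ∀ B ∈ M₂, ⟪Ω₂, B (Φ A Ω₂)⟫_ℂ = ⟪Ω₁, Φs B (A Ω₁)⟫_ℂ)
    -- Stinespring data (L_{Φ^♯}, σ_{Φ^♯}, τ_{Φ^♯}, V_{Φ^♯}, Λ_{Φ^♯}) of Φ^♯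
    (Ls : Type*) [NormedAddCommGroup Ls] [InnerProductSpace ℂ Ls] [CompleteSpace Ls]
    (Ss : StinespringData (M₂ : Set (H₂ →L[ℂ] H₂)) Φs Ls)
    (σ : (H₂ →L[ℂ] H₂) → (Ls →L[ℂ] Ls))
    (hσ : ∀ A ∈ M₂, ∀ X ∈ M₂, ∀ h : H₁, σ A (Ss.emb X h) = Ss.emb (A * X) h)
    (τ : (H₁ →L[ℂ] H₁) → (Ls →L[ℂ] Ls))
    (hτ : ∀ Y ∈ M₁.commutant, ∀ X ∈ M₂, ∀ h : H₁, τ Y (Ss.emb X h) = Ss.emb X (Y h))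
    (V : H₁ →L[ℂ] Ls) (hV : ∀ h : H₁, V h = Ss.emb 1 h)
    (Λ : H₂ →L[ℂ] Ls) (hΛ : ∀ B ∈ M₂, Λ (B Ω₂) = Ss.emb B Ω₁)
    -- the anti-unitary Ĵ on L_{Φ^♯}, with inverse Ĵ* = Jh'
    (Jh Jh' : Ls → Ls)
    (hJh_add : ∀ x y, Jh (x + y) = Jh x + Jh y)
    (hJh_smul : ∀ (c : ℂ) (x : Ls), Jh (c • x) = (starRingEnd ℂ c) • Jh x)
    (hJh_inner : ∀ x y, ⟪Jh x, Jh y⟫_ℂ = ⟪y, x⟫_ℂ)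
    (hJh_inv : ∀ x, Jh' (Jh x) = x) (hJh_inv' : ∀ x, Jh (Jh' x) = x)
    (hJV : ∀ x : H₁, Jh (V x) = V (J₁.J x))
    (hJΛ : ∀ x : H₂, Jh (Λ x) = Λ (J₂.J x))
    -- γ Y = Ĵ* τ_{Φ^♯}(Y) Ĵ for Y ∈ M₁', so that β(A₁) = γ (J₁ A₁ J₁)
    (γ : (H₁ →L[ℂ] H₁) → (Ls →L[ℂ] Ls))
    (hγ : ∀ Y ∈ M₁.commutant, ∀ x : Ls, γ Y x = Jh' (τ Y (Jh x)))
    -- σ_{Φ^♯}(M₂) commutes with β(M₁) = Ĵ* τ_{Φ^♯}(J₁ M₁ J₁) Ĵ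
    (hcomm : ∀ A₂ ∈ M₂, ∀ A₁ ∈ M₁, Commute (σ A₂) (γ (J₁.conj A₁))) :
    ∀ A₂ ∈ M₂, ∀ Y₁ ∈ M₁.commutant,
      (adjoint Λ ∘L σ A₂ ∘L γ Y₁ ∘L Λ = A₂ * Φ (J₁.conj Y₁) ∧
        A₂ * Φ (J₁.conj Y₁) ∈ M₂) ∧
      (adjoint V ∘L σ A₂ ∘L γ Y₁ ∘L V = Φs A₂ * J₁.conj Y₁ ∧
        Φs A₂ * J₁.conj Y₁ ∈ M₁) := by
  intro A₂ hA₂ Y₁ hY₁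
  have h1mem : (1 : H₂ →L[ℂ] H₂) ∈ M₂ := one_mem M₂
  set K : H₁ →L[ℂ] H₁ := J₁.conj Y₁ with hKdef
  have hK : K ∈ M₁ := J₁.conj_mem' Y₁ hY₁
  -- density of the span of `{C Ω₂ | C ∈ M₂}`
  have hd₂ : Dense (Submodule.span ℂ {x : H₂ | ∃ A ∈ (M₂ : Set (H₂ →L[ℂ] H₂)), x = A Ω₂} :
      Set H₂) := Submodule.dense_iff_topologicalClosure_eq_top.mpr hcyc₂
  -- basic anti-unitary identity
  have hJ' : ∀ x y : Ls, ⟪x, Jh' y⟫_ℂ = ⟪y, Jh x⟫_ℂ := by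
    intro x y
    calc ⟪x, Jh' y⟫_ℂ = ⟪Jh (Jh' y), Jh x⟫_ℂ := (hJh_inner (Jh' y) x).symm
      _ = ⟪y, Jh x⟫_ℂ := by rw [hJh_inv']
  -- the conjugation `J₁.conj` is involutive
  have hconj₁ : J₁.conj (J₁.conj Y₁) = Y₁ := by
    ext x
    rw [J₁.conj_apply, J₁.conj_apply, J₁.invol, J₁.invol]
  -- `σ(M₂)` commutes with `γ Y₁`
  have commγ : ∀ C ∈ M₂, ∀ x : Ls, σ C (γ Y₁ x) = γ Y₁ (σ C x) := by
    intro C hC x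
    have h := hcomm C hC (J₁.conj Y₁) (J₁.conj_mem' Y₁ hY₁)
    rw [hconj₁] at h
    have h' : σ C * γ Y₁ = γ Y₁ * σ C := h
    calc σ C (γ Y₁ x) = (σ C * γ Y₁) x := rfl
      _ = (γ Y₁ * σ C) x := by rw [h']
      _ = γ Y₁ (σ C x) := rfl
  -- `γ Y₁ ∘ V = V ∘ K`
  have γV : ∀ h : H₁, γ Y₁ (V h) = V (K h) := by
    intro h
    rw [hγ Y₁ hY₁, hJV, hV, hτ Y₁ hY₁ 1 h1mem, ← hV]
    have hv : V (Y₁ (J₁.J h)) = Jh (V (K h)) := by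
      rw [hJV, hKdef, J₁.conj_apply, J₁.invol]
    rw [hv, hJh_inv]
  -- `Λ (C Ω₂) = σ C (V Ω₁)`
  have ΛσV : ∀ C ∈ M₂, Λ (C Ω₂) = σ C (V Ω₁) := by
    intro C hC
    rw [hΛ C hC, hV, hσ C hC 1 h1mem, mul_one]
  -- `γ Y₁ (Λ (C Ω₂)) = emb C (K Ω₁)`
  have gammaLam : ∀ C ∈ M₂, γ Y₁ (Λ (C Ω₂)) = Ss.emb C (K Ω₁) := by
    intro C hC
    rw [ΛσV C hC, ← commγ C hC, γV, hV, hσ C hC 1 h1mem, mul_one]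
  -- the inner products of `Λ* γ(Y₁) Λ`
  have Rinner : ∀ B ∈ M₂, ∀ C ∈ M₂,
      ⟪Λ (B Ω₂), γ Y₁ (Λ (C Ω₂))⟫_ℂ = ⟪B Ω₂, C (Φ K Ω₂)⟫_ℂ := by
    intro B hB C hC
    rw [gammaLam C hC, hΛ B hB, Ss.inner_emb B C hB hC Ω₁ (K Ω₁),
      ← hadj K hK (star B * C) (mul_mem (star_mem hB) hC)]
    rw [ContinuousLinearMap.mul_apply, ContinuousLinearMap.star_eq_adjoint,
      ContinuousLinearMap.adjoint_inner_right]
  -- `R := Λ* γ(Y₁) Λ`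
  set R : H₂ →L[ℂ] H₂ := adjoint Λ ∘L γ Y₁ ∘L Λ with hRdef
  have Rc : ∀ C ∈ M₂, R (C Ω₂) = C (Φ K Ω₂) := by
    intro C hC
    refine eq_of_inner_eq_on_dense hd₂ ?_
    rintro z ⟨B, hB, rfl⟩
    calc ⟪B Ω₂, R (C Ω₂)⟫_ℂ
        = ⟪B Ω₂, adjoint Λ (γ Y₁ (Λ (C Ω₂)))⟫_ℂ := rfl
      _ = ⟪Λ (B Ω₂), γ Y₁ (Λ (C Ω₂))⟫_ℂ := by
          rw [ContinuousLinearMap.adjoint_inner_right]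
      _ = ⟪B Ω₂, C (Φ K Ω₂)⟫_ℂ := Rinner B hB C hC
  -- `S := Λ* τ(Y₁)* Λ`
  set S : H₂ →L[ℂ] H₂ := adjoint Λ ∘L adjoint (τ Y₁) ∘L Λ with hSdef
  have Sinner : ∀ B ∈ M₂, ∀ C ∈ M₂,
      ⟪C Ω₂, S (B Ω₂)⟫_ℂ = ⟪Y₁ Ω₁, Φs (star C * B) Ω₁⟫_ℂ := by
    intro B hB C hC
    calc ⟪C Ω₂, S (B Ω₂)⟫_ℂ
        = ⟪C Ω₂, adjoint Λ (adjoint (τ Y₁) (Λ (B Ω₂)))⟫_ℂ := rfl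
      _ = ⟪Λ (C Ω₂), adjoint (τ Y₁) (Λ (B Ω₂))⟫_ℂ := by
          rw [ContinuousLinearMap.adjoint_inner_right]
      _ = ⟪τ Y₁ (Λ (C Ω₂)), Λ (B Ω₂)⟫_ℂ := by
          rw [ContinuousLinearMap.adjoint_inner_right]
      _ = ⟪Ss.emb C (Y₁ Ω₁), Ss.emb B Ω₁⟫_ℂ := by
          rw [hΛ C hC, hΛ B hB, hτ Y₁ hY₁ C hC]
      _ = ⟪Y₁ Ω₁, Φs (star C * B) Ω₁⟫_ℂ := Ss.inner_emb C B hC hB (Y₁ Ω₁) Ω₁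
  -- `S` lies in the commutant of `M₂`
  have SMem : S ∈ M₂.commutant := by
    rw [VonNeumannAlgebra.mem_commutant_iff]
    intro g hg
    refine ContinuousLinearMap.ext_on hd₂ ?_
    rintro x ⟨C, hC, rfl⟩
    show (g * S) (C Ω₂) = (S * g) (C Ω₂)
    refine eq_of_inner_eq_on_dense hd₂ ?_
    rintro z ⟨B, hB, rfl⟩
    have lhs : ⟪B Ω₂, (g * S) (C Ω₂)⟫_ℂ = ⟪Y₁ Ω₁, Φs (star B * g * C) Ω₁⟫_ℂ := by
      calc ⟪B Ω₂, (g * S) (C Ω₂)⟫_ℂ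
          = ⟪adjoint g (B Ω₂), S (C Ω₂)⟫_ℂ := by
            rw [ContinuousLinearMap.mul_apply, ← ContinuousLinearMap.adjoint_inner_left]
        _ = ⟪(star g * B) Ω₂, S (C Ω₂)⟫_ℂ := by
            rw [ContinuousLinearMap.mul_apply, ContinuousLinearMap.star_eq_adjoint]
        _ = ⟪Y₁ Ω₁, Φs (star (star g * B) * C) Ω₁⟫_ℂ :=
            Sinner C hC (star g * B) (mul_mem (star_mem hg) hB)
        _ = ⟪Y₁ Ω₁, Φs (star B * g * C) Ω₁⟫_ℂ := by rw [star_mul, star_star]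
    have rhs : ⟪B Ω₂, (S * g) (C Ω₂)⟫_ℂ = ⟪Y₁ Ω₁, Φs (star B * g * C) Ω₁⟫_ℂ := by
      calc ⟪B Ω₂, (S * g) (C Ω₂)⟫_ℂ
          = ⟪B Ω₂, S ((g * C) Ω₂)⟫_ℂ := rfl
        _ = ⟪Y₁ Ω₁, Φs (star B * (g * C)) Ω₁⟫_ℂ :=
            Sinner (g * C) (mul_mem hg hC) B hB
        _ = ⟪Y₁ Ω₁, Φs (star B * g * C) Ω₁⟫_ℂ := by rw [mul_assoc]
    rw [lhs, rhs]
  -- `R = J₂ S* J₂`, hence `R ∈ M₂`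
  have RS : ∀ x y : H₂, ⟪x, R y⟫_ℂ = ⟪J₂.J y, S (J₂.J x)⟫_ℂ := by
    intro x y
    calc ⟪x, R y⟫_ℂ
        = ⟪Λ x, γ Y₁ (Λ y)⟫_ℂ := by
          show ⟪x, adjoint Λ (γ Y₁ (Λ y))⟫_ℂ = _
          rw [ContinuousLinearMap.adjoint_inner_right]
      _ = ⟪Λ x, Jh' (τ Y₁ (Jh (Λ y)))⟫_ℂ := by rw [hγ Y₁ hY₁]
      _ = ⟪τ Y₁ (Jh (Λ y)), Jh (Λ x)⟫_ℂ := hJ' _ _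
      _ = ⟪τ Y₁ (Λ (J₂.J y)), Λ (J₂.J x)⟫_ℂ := by rw [hJΛ, hJΛ]
      _ = ⟪Λ (J₂.J y), adjoint (τ Y₁) (Λ (J₂.J x))⟫_ℂ := by
          rw [ContinuousLinearMap.adjoint_inner_right]
      _ = ⟪J₂.J y, S (J₂.J x)⟫_ℂ := by
          simp only [hSdef, ContinuousLinearMap.comp_apply,
            ContinuousLinearMap.adjoint_inner_right]
  have Rconj : ∀ x y : H₂, ⟪x, J₂.conj (star S) y⟫_ℂ = ⟪J₂.J y, S (J₂.J x)⟫_ℂ := by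
    intro x y
    calc ⟪x, J₂.conj (star S) y⟫_ℂ
        = ⟪x, J₂.J (star S (J₂.J y))⟫_ℂ := by rw [J₂.conj_apply]
      _ = ⟪J₂.J (J₂.J x), J₂.J (star S (J₂.J y))⟫_ℂ := by rw [J₂.invol]
      _ = ⟪star S (J₂.J y), J₂.J x⟫_ℂ := J₂.inner_map _ _
      _ = ⟪adjoint S (J₂.J y), J₂.J x⟫_ℂ := by rw [ContinuousLinearMap.star_eq_adjoint]
      _ = ⟪J₂.J y, S (J₂.J x)⟫_ℂ := ContinuousLinearMap.adjoint_inner_left S _ _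
  have ReqConj : R = J₂.conj (star S) :=
    ContinuousLinearMap.ext fun y =>
      ext_inner_left ℂ fun v => (RS v y).trans (Rconj v y).symm
  have RMem : R ∈ M₂ := by
    rw [ReqConj]
    exact J₂.conj_mem' (star S) (star_mem SMem)
  have RΩ : R Ω₂ = Φ K Ω₂ := by
    have h := Rc 1 h1mem
    simpa using h
  have RPhiK : R = Φ K := by
    have hsub : R - Φ K ∈ M₂ := sub_mem RMem (hmem K hK)
    have h0 : (R - Φ K) Ω₂ = 0 := by
      rw [ContinuousLinearMap.sub_apply, RΩ, sub_self]
    exact sub_eq_zero.mp (hsep₂ _ hsub h0)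
  -- first identity
  have goal1 : adjoint Λ ∘L σ A₂ ∘L γ Y₁ ∘L Λ = A₂ * Φ K := by
    refine ContinuousLinearMap.ext_on hd₂ ?_
    rintro x ⟨C, hC, rfl⟩
    show adjoint Λ (σ A₂ (γ Y₁ (Λ (C Ω₂)))) = (A₂ * Φ K) (C Ω₂)
    rw [gammaLam C hC, hσ A₂ hA₂ C hC, ← gammaLam (A₂ * C) (mul_mem hA₂ hC)]
    have h3 : adjoint Λ (γ Y₁ (Λ ((A₂ * C) Ω₂))) = R ((A₂ * C) Ω₂) := rfl
    rw [h3, Rc (A₂ * C) (mul_mem hA₂ hC)]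
    have h4 : Φ K (C Ω₂) = C (Φ K Ω₂) := by
      calc Φ K (C Ω₂) = R (C Ω₂) := by rw [RPhiK]
        _ = C (Φ K Ω₂) := Rc C hC
    rw [ContinuousLinearMap.mul_apply, ContinuousLinearMap.mul_apply, h4]
  -- second identity
  have goal2 : adjoint V ∘L σ A₂ ∘L γ Y₁ ∘L V = Φs A₂ * K := by
    refine ContinuousLinearMap.ext fun h => ?_
    refine ext_inner_left ℂ fun g => ?_
    show ⟪g, adjoint V (σ A₂ (γ Y₁ (V h)))⟫_ℂ = _
    rw [γV h, hV, hσ A₂ hA₂ 1 h1mem, mul_one,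
      ContinuousLinearMap.adjoint_inner_right]
    calc ⟪V g, Ss.emb A₂ (K h)⟫_ℂ
        = ⟪Ss.emb 1 g, Ss.emb A₂ (K h)⟫_ℂ := by rw [hV]
      _ = ⟪g, Φs (star 1 * A₂) (K h)⟫_ℂ := Ss.inner_emb 1 A₂ h1mem hA₂ g (K h)
      _ = ⟪g, (Φs A₂ * K) h⟫_ℂ := by rw [star_one, one_mul]; rfl
  exact ⟨⟨goal1, mul_mem hA₂ (hmem K hK)⟩, ⟨goal2, mul_mem (hmems A₂ hA₂) hK⟩⟩
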